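/- arXiv:1508.05987 — 5 statements merged into one kernel-verified Lean document; each statement's English description precedes it below -/
import Mathlib

section
/- Let g : ℝⁿ → ℝ be defined by g(α) = -⟨y, α⟩ + (1/2)αᵀKα + 2λ·Σᵢ φ*_ω(αᵢ), where K is symmetric positive semidefinite, λ > 0, ω ∈ (0,1), and φ*_ω(t) = t²/(4(1-ω)) for t ≤ 0 and t²/(4ω) for t > 0. If ĝ' (the gradient of g) vanishes at α̂, then for all α ∈ ℝⁿ: (1/2)(α-α̂)ᵀK(α-α̂) + (λ/(2·max(1-ω,ω)))‖α-α̂‖² ≤ g(α) - g(α̂) ≤ (1/2)(α-α̂)ᵀK(α-α̂) + (λ/(2·min(1-ω,ω)))‖α-α̂‖². -/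
open Matrix

noncomputable def phiStar (ω t : ℝ) : ℝ :=
  if t ≤ 0 then t ^ 2 / (4 * (1 - ω)) else t ^ 2 / (4 * ω)

noncomputable def dphi (ω t : ℝ) : ℝ :=
  if t ≤ 0 then t / (2 * (1 - ω)) else t / (2 * ω)

lemma hpiece (c : ℝ) (s : ℝ) : HasDerivAt (fun x : ℝ => x ^ 2 / (4 * c)) (s / (2 * c)) s := by
  have h := (hasDerivAt_pow 2 s).div_const (4 * c)
  rw [show s / (2 * c) = ((2:ℕ):ℝ) * s ^ (2 - 1) / (4 * c) by norm_num; ring]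
  exact h

lemma hasDerivAt_phiStar {ω : ℝ} (h1 : 0 < ω) (h2 : ω < 1) (t : ℝ) :
    HasDerivAt (phiStar ω) (dphi ω t) t := by
  have hu : (0 : ℝ) < 1 - ω := by linarith
  rcases lt_trichotomy t 0 with ht | ht | ht
  · rw [show dphi ω t = t / (2 * (1 - ω)) from if_pos ht.le]
    apply (hpiece (1 - ω) t).congr_of_eventuallyEq
    filter_upwards [Iio_mem_nhds ht] with s hs
    simp [phiStar, le_of_lt (Set.mem_Iio.mp hs)]
  · subst ht
    rw [show dphi ω 0 = 0 by simp [dphi]]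
    have hle : HasDerivWithinAt (phiStar ω) 0 (Set.Iic 0) 0 := by
      have h := (hpiece (1 - ω) 0).hasDerivWithinAt (s := Set.Iic 0)
      rw [zero_div] at h
      refine h.congr ?_ ?_
      · intro x hx; simp [phiStar, (Set.mem_Iic.mp hx)]
      · simp [phiStar]
    have hge : HasDerivWithinAt (phiStar ω) 0 (Set.Ici 0) 0 := by
      have h := (hpiece ω 0).hasDerivWithinAt (s := Set.Ici 0)
      rw [zero_div] at h
      refine h.congr ?_ ?_
      · intro x hx
        rcases eq_or_lt_of_le (Set.mem_Ici.mp hx) with hx0 | hx0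
        · simp [phiStar, ← hx0]
        · simp [phiStar, not_le.mpr hx0]
      · simp [phiStar]
    have := hle.union hge
    rw [Set.Iic_union_Ici] at this
    exact this.hasDerivAt Filter.univ_mem
  · rw [show dphi ω t = t / (2 * ω) from if_neg (not_le.mpr ht)]
    apply (hpiece ω t).congr_of_eventuallyEq
    filter_upwards [Ioi_mem_nhds ht] with s hs
    simp [phiStar, not_le.mpr (Set.mem_Ioi.mp hs)]

lemma bregman {ω : ℝ} (h1 : 0 < ω) (h2 : ω < 1) (a b : ℝ) :
    (a - b) ^ 2 / (4 * max (1 - ω) ω) ≤ phiStar ω a - phiStar ω b - dphi ω b * (a - b) ∧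
    phiStar ω a - phiStar ω b - dphi ω b * (a - b) ≤ (a - b) ^ 2 / (4 * min (1 - ω) ω) := by
  have hu : (0 : ℝ) < 1 - ω := by linarith
  have hM1 : 1 - ω ≤ max (1 - ω) ω := le_max_left _ _
  have hM2 : ω ≤ max (1 - ω) ω := le_max_right _ _
  have hm1 : min (1 - ω) ω ≤ 1 - ω := min_le_left _ _
  have hm2 : min (1 - ω) ω ≤ ω := min_le_right _ _
  have hM : 0 < max (1 - ω) ω := lt_of_lt_of_le hu hM1
  have hm : 0 < min (1 - ω) ω := lt_min hu h1
  set M := max (1 - ω) ω with hMdef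
  set m := min (1 - ω) ω with hmdef
  unfold phiStar dphi
  rcases le_or_gt a 0 with ha | ha <;> rcases le_or_gt b 0 with hb | hb
  · rw [if_pos ha, if_pos hb, if_pos hb]
    have eD : a ^ 2 / (4 * (1 - ω)) - b ^ 2 / (4 * (1 - ω)) - b / (2 * (1 - ω)) * (a - b)
        = (a - b) ^ 2 / (4 * (1 - ω)) := by field_simp; ring
    rw [eD]
    constructor
    · gcongr <;> linarith
    · gcongr <;> linarith
  · rw [if_pos ha, if_neg (not_le.mpr hb), if_neg (not_le.mpr hb)]
    constructor
    · rw [div_le_iff₀ (by positivity)]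
      have e : (a ^ 2 / (4 * (1 - ω)) - b ^ 2 / (4 * ω) - b / (2 * ω) * (a - b)) * (4 * M)
          = (a ^ 2 * ω + b ^ 2 * (1 - ω) - 2 * a * b * (1 - ω)) * M / ((1 - ω) * ω) := by
        field_simp; ring
      rw [e, le_div_iff₀ (by positivity)]
      nlinarith [mul_nonneg (mul_nonneg (sq_nonneg a) h1.le) (sub_nonneg.2 hM1),
        mul_nonneg (mul_nonneg (sq_nonneg b) hu.le) (sub_nonneg.2 hM2),
        mul_nonneg (mul_nonneg (mul_nonneg (neg_nonneg.2 (mul_nonpos_of_nonpos_of_nonneg ha hb.le)) hu.le) hu.le) (sub_nonneg.2 hM2)]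
    · rw [le_div_iff₀ (by positivity)]
      have e : (a ^ 2 / (4 * (1 - ω)) - b ^ 2 / (4 * ω) - b / (2 * ω) * (a - b)) * (4 * m)
          = (a ^ 2 * ω + b ^ 2 * (1 - ω) - 2 * a * b * (1 - ω)) * m / ((1 - ω) * ω) := by
        field_simp; ring
      rw [e, div_le_iff₀ (by positivity)]
      nlinarith [mul_nonneg (mul_nonneg (sq_nonneg a) h1.le) (sub_nonneg.2 hm1),
        mul_nonneg (mul_nonneg (sq_nonneg b) hu.le) (sub_nonneg.2 hm2),
        mul_nonneg (mul_nonneg (neg_nonneg.2 (mul_nonpos_of_nonpos_of_nonneg ha hb.le)) hu.le) (sub_nonneg.2 hm2)]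
  · rw [if_neg (not_le.mpr ha), if_pos hb, if_pos hb]
    constructor
    · rw [div_le_iff₀ (by positivity)]
      have e : (a ^ 2 / (4 * ω) - b ^ 2 / (4 * (1 - ω)) - b / (2 * (1 - ω)) * (a - b)) * (4 * M)
          = (a ^ 2 * (1 - ω) + b ^ 2 * ω - 2 * a * b * ω) * M / ((1 - ω) * ω) := by
        field_simp; ring
      rw [e, le_div_iff₀ (by positivity)]
      nlinarith [mul_nonneg (mul_nonneg (sq_nonneg a) hu.le) (sub_nonneg.2 hM2),
        mul_nonneg (mul_nonneg (sq_nonneg b) h1.le) (sub_nonneg.2 hM1),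
        mul_nonneg (mul_nonneg (mul_nonneg (neg_nonneg.2 (mul_nonpos_of_nonneg_of_nonpos ha.le hb)) h1.le) h1.le) (sub_nonneg.2 hM1)]
    · rw [le_div_iff₀ (by positivity)]
      have e : (a ^ 2 / (4 * ω) - b ^ 2 / (4 * (1 - ω)) - b / (2 * (1 - ω)) * (a - b)) * (4 * m)
          = (a ^ 2 * (1 - ω) + b ^ 2 * ω - 2 * a * b * ω) * m / ((1 - ω) * ω) := by
        field_simp; ring
      rw [e, div_le_iff₀ (by positivity)]
      nlinarith [mul_nonneg (mul_nonneg (sq_nonneg a) hu.le) (sub_nonneg.2 hm2),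
        mul_nonneg (mul_nonneg (sq_nonneg b) h1.le) (sub_nonneg.2 hm1),
        mul_nonneg (mul_nonneg (neg_nonneg.2 (mul_nonpos_of_nonneg_of_nonpos ha.le hb)) h1.le) (sub_nonneg.2 hm1)]
  · rw [if_neg (not_le.mpr ha), if_neg (not_le.mpr hb), if_neg (not_le.mpr hb)]
    have eD : a ^ 2 / (4 * ω) - b ^ 2 / (4 * ω) - b / (2 * ω) * (a - b)
        = (a - b) ^ 2 / (4 * ω) := by field_simp; ring
    rw [eD]
    constructor
    · gcongr <;> linarith
    · gcongr <;> linarith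

theorem dual_objective_sandwich {n : ℕ} (y : Fin n → ℝ) (K : Matrix (Fin n) (Fin n) ℝ)
    (hK : K.PosSemidef) (lam ω : ℝ) (hlam : 0 < lam) (hω : ω ∈ Set.Ioo (0 : ℝ) 1)
    (g : (Fin n → ℝ) → ℝ)
    (hg : ∀ α : Fin n → ℝ,
      g α = -(y ⬝ᵥ α) + (1 / 2) * (α ⬝ᵥ K.mulVec α) + 2 * lam * ∑ i, phiStar ω (α i))
    (αhat : Fin n → ℝ) (hstat : fderiv ℝ g αhat = 0) :
    ∀ α : Fin n → ℝ,
      (1 / 2) * ((α - αhat) ⬝ᵥ K.mulVec (α - αhat))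
          + lam / (2 * max (1 - ω) ω) * ∑ i, (α i - αhat i) ^ 2
        ≤ g α - g αhat ∧
      g α - g αhat
        ≤ (1 / 2) * ((α - αhat) ⬝ᵥ K.mulVec (α - αhat))
          + lam / (2 * min (1 - ω) ω) * ∑ i, (α i - αhat i) ^ 2 := by
  obtain ⟨hω1, hω2⟩ := hω
  have hu : (0 : ℝ) < 1 - ω := by linarith
  have hgfun : g = fun α => -(y ⬝ᵥ α) + (1 / 2) * (α ⬝ᵥ K.mulVec α)
      + 2 * lam * ∑ i, phiStar ω (α i) := funext hg
  rw [hgfun] at hstat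
  -- derivative
  have hproj : ∀ i : Fin n, HasFDerivAt (fun α : Fin n → ℝ => α i)
      (ContinuousLinearMap.proj (R := ℝ) (φ := fun _ : Fin n => ℝ) i) αhat :=
    fun i => hasFDerivAt_apply i αhat
  have hA : HasFDerivAt (fun α : Fin n → ℝ => ∑ i, y i * α i)
      (∑ i, y i • ContinuousLinearMap.proj (R := ℝ) (φ := fun _ : Fin n => ℝ) i) αhat :=
    HasFDerivAt.fun_sum fun i _ => (hproj i).const_mul (y i)
  have hQ : HasFDerivAt (fun α : Fin n → ℝ => ∑ i, α i * ∑ j, K i j * α j)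
      (∑ i, (αhat i • (∑ j, K i j • ContinuousLinearMap.proj (R := ℝ) (φ := fun _ : Fin n => ℝ) j)
            + (∑ j, K i j * αhat j) • ContinuousLinearMap.proj (R := ℝ) (φ := fun _ : Fin n => ℝ) i)) αhat :=
    HasFDerivAt.fun_sum fun i _ => (hproj i).mul
      (HasFDerivAt.fun_sum fun j _ => (hproj j).const_mul (K i j))
  have hP : HasFDerivAt (fun α : Fin n → ℝ => ∑ i, phiStar ω (α i))
      (∑ i, dphi ω (αhat i) • ContinuousLinearMap.proj (R := ℝ) (φ := fun _ : Fin n => ℝ) i) αhat :=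
    HasFDerivAt.fun_sum fun i _ =>
      by have h := (hasDerivAt_phiStar hω1 hω2 (αhat i)).comp_hasFDerivAt αhat (hproj i); exact h
  have hder : HasFDerivAt (fun α : Fin n → ℝ =>
        -(y ⬝ᵥ α) + (1 / 2) * (α ⬝ᵥ K.mulVec α) + 2 * lam * ∑ i, phiStar ω (α i))
      (-(∑ i, y i • ContinuousLinearMap.proj (R := ℝ) (φ := fun _ : Fin n => ℝ) i)
        + (1 / 2 : ℝ) • (∑ i, (αhat i • (∑ j, K i j • ContinuousLinearMap.proj (R := ℝ) (φ := fun _ : Fin n => ℝ) j)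
            + (∑ j, K i j * αhat j) • ContinuousLinearMap.proj (R := ℝ) (φ := fun _ : Fin n => ℝ) i))
        + (2 * lam) • (∑ i, dphi ω (αhat i) • ContinuousLinearMap.proj (R := ℝ) (φ := fun _ : Fin n => ℝ) i)) αhat :=
    (hA.neg.add (hQ.const_mul (1 / 2))).add (hP.const_mul (2 * lam))
  have hfd := hder.fderiv
  rw [hstat] at hfd
  intro α
  have e0 := DFunLike.congr_fun hfd.symm (α - αhat)
  simp only [ContinuousLinearMap.add_apply, ContinuousLinearMap.neg_apply,
    ContinuousLinearMap.smul_apply, ContinuousLinearMap.coe_sum', Finset.sum_apply,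
    ContinuousLinearMap.proj_apply, smul_eq_mul, ContinuousLinearMap.zero_apply,
    Pi.sub_apply] at e0
  have e0fold : -(y ⬝ᵥ (α - αhat)) + (1 / 2) * (αhat ⬝ᵥ K.mulVec (α - αhat)
      + (K.mulVec αhat) ⬝ᵥ (α - αhat)) + 2 * lam * ∑ i, dphi ω (αhat i) * (α i - αhat i)
      = 0 := by
    rw [← e0]
    simp only [dotProduct, Matrix.mulVec, Pi.sub_apply, Finset.sum_add_distrib,
      Finset.mul_sum]
  have hαsum : αhat + (α - αhat) = α := by abel
  have e2 : y ⬝ᵥ α = y ⬝ᵥ αhat + y ⬝ᵥ (α - αhat) := by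
    conv_lhs => rw [← hαsum]
    rw [dotProduct_add]
  have e3 : α ⬝ᵥ K.mulVec α = αhat ⬝ᵥ K.mulVec αhat
      + (αhat ⬝ᵥ K.mulVec (α - αhat) + (K.mulVec αhat) ⬝ᵥ (α - αhat))
      + (α - αhat) ⬝ᵥ K.mulVec (α - αhat) := by
    conv_lhs => rw [← hαsum]
    rw [Matrix.mulVec_add, dotProduct_add, add_dotProduct,
      add_dotProduct, dotProduct_comm (α - αhat) (K.mulVec αhat)]
    ring
  have e1 : ∑ i, (phiStar ω (α i) - phiStar ω (αhat i) - dphi ω (αhat i) * (α i - αhat i))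
      = ∑ i, phiStar ω (α i) - ∑ i, phiStar ω (αhat i)
        - ∑ i, dphi ω (αhat i) * (α i - αhat i) := by
    rw [Finset.sum_sub_distrib, Finset.sum_sub_distrib]
  have key : g α - g αhat = (1 / 2) * ((α - αhat) ⬝ᵥ K.mulVec (α - αhat))
      + 2 * lam * ∑ i, (phiStar ω (α i) - phiStar ω (αhat i)
        - dphi ω (αhat i) * (α i - αhat i)) := by
    rw [hg α, hg αhat]
    linear_combination (-1 : ℝ) * e2 + (1 / 2 : ℝ) * e3 - 2 * lam * e1 + e0fold
  have hM1 : 1 - ω ≤ max (1 - ω) ω := le_max_left _ _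
  have hM : 0 < max (1 - ω) ω := lt_of_lt_of_le hu hM1
  have hm : 0 < min (1 - ω) ω := lt_min hu hω1
  have hB := fun i => bregman hω1 hω2 (α i) (αhat i)
  have s1 : (∑ i, (α i - αhat i) ^ 2) / (4 * max (1 - ω) ω)
      ≤ ∑ i, (phiStar ω (α i) - phiStar ω (αhat i) - dphi ω (αhat i) * (α i - αhat i)) := by
    rw [Finset.sum_div]
    exact Finset.sum_le_sum fun i _ => (hB i).1
  have s2 : ∑ i, (phiStar ω (α i) - phiStar ω (αhat i) - dphi ω (αhat i) * (α i - αhat i))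
      ≤ (∑ i, (α i - αhat i) ^ 2) / (4 * min (1 - ω) ω) := by
    rw [Finset.sum_div]
    exact Finset.sum_le_sum fun i _ => (hB i).2
  constructor
  · rw [key]
    have h1 := mul_le_mul_of_nonneg_left s1 (by positivity : (0:ℝ) ≤ 2 * lam)
    have eq1 : lam / (2 * max (1 - ω) ω) * ∑ i, (α i - αhat i) ^ 2
        = 2 * lam * ((∑ i, (α i - αhat i) ^ 2) / (4 * max (1 - ω) ω)) := by
      field_simp
      ring
    linarith
  · rw [key]
    have h2 := mul_le_mul_of_nonneg_left s2 (by positivity : (0:ℝ) ≤ 2 * lam)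
    have eq2 : lam / (2 * min (1 - ω) ω) * ∑ i, (α i - αhat i) ^ 2
        = 2 * lam * ((∑ i, (α i - αhat i) ^ 2) / (4 * min (1 - ω) ω)) := by
      field_simp
      ring
    linarith
end

section
/- Let F : ℝᵐ → ℝ be differentiable, bounded below, with quadratic majorizer Q(α|β) = F(β) + ∇F(β)ᵀ(α-β) + (α-β)ᵀK_u(α-β) satisfying F(α) ≤ Q(α|β) for all α, β, where K_u is symmetric positive definite. If the MM iterates α⁽ᵏ⁺¹⁾ = argmin_α Q(α|α⁽ᵏ⁾) are generated, then ‖α⁽ᵏ⁺¹⁾ - α⁽ᵏ⁾‖ → 0 as k → ∞. -/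
open Matrix Filter


lemma posdef_coercive' {m : ℕ} (Ku : Matrix (Fin m) (Fin m) ℝ) (hKu : Ku.PosDef) :
    ∃ c : ℝ, 0 < c ∧ ∀ x : Fin m → ℝ, c * (∑ i, x i ^ 2) ≤ x ⬝ᵥ Ku.mulVec x := by
  rcases Nat.eq_zero_or_pos m with hm | hm
  · refine ⟨1, one_pos, fun x => ?_⟩
    subst hm
    simp [dotProduct]
  · have hcont : Continuous fun x : EuclideanSpace ℝ (Fin m) =>
        (x : Fin m → ℝ) ⬝ᵥ Ku.mulVec x := by
      unfold dotProduct Matrix.mulVec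
      dsimp
      exact continuous_finset_sum _ fun i _ =>
        ((EuclideanSpace.proj i).continuous).mul
          (continuous_finset_sum _ fun j _ =>
            continuous_const.mul ((EuclideanSpace.proj j).continuous))
    haveI : Nontrivial (EuclideanSpace ℝ (Fin m)) := by
      refine ⟨EuclideanSpace.single ⟨0, hm⟩ (1:ℝ), 0, fun h => ?_⟩
      have h1 := congrArg (fun v : EuclideanSpace ℝ (Fin m) => v ⟨0, hm⟩) h
      simp [EuclideanSpace.single_apply] at h1
    have hsph : (Metric.sphere (0 : EuclideanSpace ℝ (Fin m)) 1).Nonempty :=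
      NormedSpace.sphere_nonempty.2 zero_le_one
    obtain ⟨u, hu, hmin⟩ := (isCompact_sphere (0 : EuclideanSpace ℝ (Fin m))
      1).exists_isMinOn hsph hcont.continuousOn
    have hu1 : ‖u‖ = 1 := mem_sphere_zero_iff_norm.1 hu
    have hu0 : (u : Fin m → ℝ) ≠ 0 := by
      intro h
      rw [show u = (0 : EuclideanSpace ℝ (Fin m)) from (WithLp.ofLp_eq_zero 2).1 h] at hu1
      simp at hu1
    have hc : 0 < (u : Fin m → ℝ) ⬝ᵥ Ku.mulVec u := by
      have := hKu.dotProduct_mulVec_pos hu0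
      simpa using this
    refine ⟨_, hc, fun x => ?_⟩
    by_cases hx : x = 0
    · simp [hx]
    · set r : ℝ := Real.sqrt (∑ i, x i ^ 2) with hr
      have hrpos : 0 < r := by
        apply Real.sqrt_pos.2
        have : ∃ i, x i ≠ 0 := by
          by_contra h
          push_neg at h
          exact hx (funext h)
        obtain ⟨i, hi⟩ := this
        exact Finset.sum_pos' (fun j _ => sq_nonneg _) ⟨i, Finset.mem_univ i, by positivity⟩
      set y : EuclideanSpace ℝ (Fin m) := (WithLp.equiv 2 (Fin m → ℝ)).symm x with hy
      have hyx : ∀ i, y i = x i := fun i => rfl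
      have hnorm : ‖y‖ = r := by
        rw [EuclideanSpace.norm_eq, hr]
        congr 1
        exact Finset.sum_congr rfl fun i _ => by rw [hyx, Real.norm_eq_abs, sq_abs]
      have hmem : (r⁻¹ • y) ∈ Metric.sphere (0 : EuclideanSpace ℝ (Fin m)) 1 := by
        rw [mem_sphere_zero_iff_norm, norm_smul, hnorm, Real.norm_eq_abs,
          abs_of_pos (inv_pos.2 hrpos), inv_mul_cancel₀ hrpos.ne']
      have hle := hmin hmem
      have hsmul : ((r⁻¹ • y : EuclideanSpace ℝ (Fin m)) : Fin m → ℝ) ⬝ᵥ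
          Ku.mulVec ((r⁻¹ • y : EuclideanSpace ℝ (Fin m)) : Fin m → ℝ)
          = r⁻¹ * (r⁻¹ * (x ⬝ᵥ Ku.mulVec x)) := by
        have : ((r⁻¹ • y : EuclideanSpace ℝ (Fin m)) : Fin m → ℝ) = r⁻¹ • x := rfl
        rw [this, Matrix.mulVec_smul, smul_dotProduct, dotProduct_smul]
        simp [smul_eq_mul]
      have hle' : (u ⬝ᵥ Ku.mulVec u) ≤ r⁻¹ * (r⁻¹ * (x ⬝ᵥ Ku.mulVec x)) := by
        have := hle
        simp only [Set.mem_setOf_eq] at this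
        calc u ⬝ᵥ Ku.mulVec u ≤ _ := this
        _ = r⁻¹ * (r⁻¹ * (x ⬝ᵥ Ku.mulVec x)) := hsmul
      have hr2 : r ^ 2 = ∑ i, x i ^ 2 := Real.sq_sqrt (by positivity)
      rw [← hr2, sq]
      have key := mul_le_mul_of_nonneg_right hle' (mul_pos hrpos hrpos).le
      have heq : r⁻¹ * (r⁻¹ * (x ⬝ᵥ Ku.mulVec x)) * (r * r) = x ⬝ᵥ Ku.mulVec x := by
        field_simp
      rw [heq] at key
      nlinarith [key]


theorem mm_step_to_zero {m : ℕ} (F : (Fin m → ℝ) → ℝ) (hF : Differentiable ℝ F)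
    (hbdd : ∃ C : ℝ, ∀ α : Fin m → ℝ, C ≤ F α)
    (gradF : (Fin m → ℝ) → (Fin m → ℝ))
    (hgrad : ∀ β v : Fin m → ℝ, fderiv ℝ F β v = gradF β ⬝ᵥ v)
    (Ku : Matrix (Fin m) (Fin m) ℝ) (hKu : Ku.PosDef)
    (Q : (Fin m → ℝ) → (Fin m → ℝ) → ℝ)
    (hQ : ∀ α β : Fin m → ℝ,
      Q α β = F β + gradF β ⬝ᵥ (α - β) + (α - β) ⬝ᵥ Ku.mulVec (α - β))
    (hmaj : ∀ α β : Fin m → ℝ, F α ≤ Q α β)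
    (a : ℕ → (Fin m → ℝ))
    (hupd : ∀ k : ℕ, a (k + 1) = a k - (1 / 2 : ℝ) • Ku⁻¹.mulVec (gradF (a k))) :
    Tendsto (fun k : ℕ => Real.sqrt (∑ i, (a (k + 1) i - a k i) ^ 2)) atTop (nhds 0) := by
  set d : ℕ → (Fin m → ℝ) := fun k => a (k + 1) - a k with hd0
  have hd : ∀ k, a (k + 1) - a k = d k := fun k => rfl
  set q : ℕ → ℝ := fun k => d k ⬝ᵥ Ku.mulVec (d k) with hq0'
  have hqdef : ∀ k, d k ⬝ᵥ Ku.mulVec (d k) = q k := fun k => rfl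
  have hKuinv : Ku * Ku⁻¹ = 1 := Matrix.mul_nonsing_inv Ku hKu.det_pos.ne'.isUnit
  -- the step in terms of the gradient
  have hstep : ∀ k, d k = (-(1/2) : ℝ) • Ku⁻¹.mulVec (gradF (a k)) := by
    intro k
    rw [← hd, hupd k]
    funext i
    simp only [Pi.sub_apply, Pi.smul_apply, Pi.neg_apply, smul_eq_mul]
    ring
  have hgKd : ∀ k, gradF (a k) = (-2 : ℝ) • Ku.mulVec (d k) := by
    intro k
    rw [hstep k, Matrix.mulVec_smul, Matrix.mulVec_mulVec, hKuinv, Matrix.one_mulVec,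
      smul_smul]
    norm_num
  have hgd : ∀ k, gradF (a k) ⬝ᵥ d k = -2 * q k := by
    intro k
    rw [hgKd k, smul_dotProduct, smul_eq_mul, dotProduct_comm, hqdef]
  have hq0 : ∀ k, 0 ≤ q k := by
    intro k
    have h2 := hKu.posSemidef.dotProduct_mulVec_nonneg (d k)
    have h3 : star (d k) = d k := rfl
    rw [h3, hqdef] at h2
    simpa using h2
  have hdec : ∀ k, F (a (k + 1)) ≤ F (a k) - q k := by
    intro k
    have h1 := hmaj (a (k + 1)) (a k)
    rw [hQ] at h1
    rw [hd, hgd, hqdef] at h1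
    linarith
  -- F ∘ a converges
  obtain ⟨C, hC⟩ := hbdd
  have hant : Antitone (fun k => F (a k)) := by
    apply antitone_nat_of_succ_le
    intro k
    have := hdec k
    have := hq0 k
    linarith
  have hbb : BddBelow (Set.range fun k => F (a k)) := by
    refine ⟨C, fun y hy => ?_⟩
    obtain ⟨k, rfl⟩ := hy
    exact hC _
  have hFconv : Tendsto (fun k => F (a k)) atTop (nhds (⨅ k, F (a k))) :=
    tendsto_atTop_ciInf hant hbb
  have hshift : Tendsto (fun k => F (a (k + 1))) atTop (nhds (⨅ k, F (a k))) :=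
    hFconv.comp (tendsto_add_atTop_nat 1)
  have hdiff : Tendsto (fun k => F (a k) - F (a (k + 1))) atTop (nhds 0) := by
    have := hFconv.sub hshift
    rwa [sub_self] at this
  have hqto : Tendsto q atTop (nhds 0) := by
    apply squeeze_zero hq0 (fun k => by linarith [hdec k]) hdiff
  -- coercivity
  obtain ⟨c, hc, hcoer⟩ := posdef_coercive' Ku hKu
  have hs : ∀ k, (∑ i, (a (k + 1) i - a k i) ^ 2) = ∑ i, d k i ^ 2 := fun k =>
    Finset.sum_congr rfl fun i _ => by rw [← hd]; rfl
  have hsto : Tendsto (fun k => ∑ i, (a (k + 1) i - a k i) ^ 2) atTop (nhds 0) := by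
    apply squeeze_zero (fun k => Finset.sum_nonneg fun i _ => sq_nonneg _)
      (g := fun k => c⁻¹ * q k)
    · intro k
      rw [hs k]
      have h1 := hcoer (d k)
      rw [hqdef] at h1
      have h2 := mul_le_mul_of_nonneg_left h1 (inv_nonneg.2 hc.le)
      rwa [← mul_assoc, inv_mul_cancel₀ hc.ne', one_mul] at h2
    · have := hqto.const_mul c⁻¹
      simpa using this
  have := (Real.continuous_sqrt.tendsto 0).comp hsto
  simpa [Real.sqrt_zero, Function.comp_def] using this
end

section
/- Let F : ℝᵐ → ℝ be differentiable with unique global minimizer α̂, and suppose for all α, β: F(β) + ∇F(β)ᵀ(α-β) + (α-β)ᵀK_l(α-β) ≤ F(α) ≤ F(β) + ∇F(β)ᵀ(α-β) + (α-β)ᵀK_u(α-β), where K_l, K_u are symmetric positive definite. Define Λ_k = (Q(α̂|α⁽ᵏ⁾) - F(α̂)) / ((α̂-α⁽ᵏ⁾)ᵀK_u(α̂-α⁽ᵏ⁾)) for α⁽ᵏ⁾ ≠ α̂, where Q(α|β) = F(β) + ∇F(β)ᵀ(α-β) + (α-β)ᵀK_u(α-β). Then Λ_k ≤ 1 - γ_min(K_u⁻¹K_l)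 < 1. -/
open Matrix

set_option maxHeartbeats 1000000

private lemma quad_sandwich {m : ℕ} (B M : Matrix (Fin m) (Fin m) ℝ) (hB : Bᵀ = B)
    (d : Fin m → ℝ) : (B *ᵥ d) ⬝ᵥ (M *ᵥ (B *ᵥ d)) = d ⬝ᵥ ((B * M * B) *ᵥ d) := by
  rw [mulVec_mulVec, dotProduct_mulVec, dotProduct_mulVec, ← vecMul_transpose, hB,
    vecMul_vecMul, ← Matrix.mul_assoc]

private lemma rayleigh_lower {m : ℕ} (Kl Ku : Matrix (Fin m) (Fin m) ℝ)
    (hKl : Kl.PosDef) (hKu : Ku.PosDef) (γmin : ℝ)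
    (hγ : ∀ μ ∈ {μ : ℝ | ∃ v : Fin m → ℝ, v ≠ 0 ∧ (Ku⁻¹ * Kl).mulVec v = μ • v}, γmin ≤ μ) :
    ∀ d : Fin m → ℝ, γmin * (d ⬝ᵥ Ku *ᵥ d) ≤ d ⬝ᵥ Kl *ᵥ d := by
  have hKus : Ku.PosSemidef := hKu.posSemidef
  obtain ⟨B, hBH, hBB⟩ : ∃ B : Matrix (Fin m) (Fin m) ℝ, B.IsHermitian ∧ B * B = Ku :=
    open scoped MatrixOrder in
      ⟨CFC.sqrt Ku, (CFC.sqrt_nonneg Ku).posSemidef.1, CFC.sqrt_mul_sqrt_self Ku hKus.nonneg⟩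
  have hBt : Bᵀ = B := hBH
  have hdetKu : IsUnit Ku.det := isUnit_iff_ne_zero.mpr hKu.det_pos.ne'
  have hdet : IsUnit B.det := by
    have : B.det * B.det = Ku.det := by rw [← det_mul, hBB]
    exact isUnit_iff_ne_zero.mpr (fun h => hKu.det_pos.ne' (by rw [← this, h, zero_mul]))
  have hBiB : B⁻¹ * B = 1 := nonsing_inv_mul B hdet
  have hBBi : B * B⁻¹ = 1 := mul_nonsing_inv B hdet
  have hKuinv : Ku⁻¹ = B⁻¹ * B⁻¹ := by rw [← hBB, Matrix.mul_inv_rev]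
  set S := B⁻¹ * Kl * B⁻¹ with hSdef
  have hSH : S.IsHermitian := by
    have h1 : B⁻¹.IsHermitian := hBH.inv
    have h2 : Kl.IsHermitian := hKl.1
    have h1t : B⁻¹ᵀ = B⁻¹ := h1
    have h2t : Klᵀ = Kl := h2
    simp [hSdef, Matrix.IsHermitian, conjTranspose_mul, h1t, h2t, Matrix.mul_assoc]
  set T := S - γmin • (1 : Matrix (Fin m) (Fin m) ℝ) with hTdef
  have hTH : T.IsHermitian := by
    have : (γmin • (1 : Matrix (Fin m) (Fin m) ℝ)).IsHermitian := by
      simp [Matrix.IsHermitian]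
    exact hSH.sub this
  have hkey : ∀ i, 0 ≤ hTH.eigenvalues i := by
    intro i
    set μ := hTH.eigenvalues i with hμdef
    set w : Fin m → ℝ := ⇑(hTH.eigenvectorBasis i) with hwdef
    have hw : T *ᵥ w = μ • w := hTH.mulVec_eigenvectorBasis i
    have hwne : w ≠ 0 := by
      intro h
      apply hTH.eigenvectorBasis.orthonormal.ne_zero i
      ext j
      exact congrFun h j
    have hSw : S *ᵥ w = (μ + γmin) • w := by
      have : S *ᵥ w - γmin • w = μ • w := by
        rw [← hw, hTdef, sub_mulVec, smul_mulVec, one_mulVec]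
      have h2 : S *ᵥ w = μ • w + γmin • w := by
        rw [← this]; abel
      rw [h2, add_smul]
    set v : Fin m → ℝ := B⁻¹ *ᵥ w with hvdef
    have hvne : v ≠ 0 := by
      intro h
      apply hwne
      have : (B * B⁻¹) *ᵥ w = B *ᵥ v := by rw [← mulVec_mulVec]
      rw [hBBi, one_mulVec] at this
      rw [this, h, mulVec_zero]
    have heig : (Ku⁻¹ * Kl) *ᵥ v = (μ + γmin) • v := by
      have h1 : (Ku⁻¹ * Kl) *ᵥ v = (B⁻¹ * S) *ᵥ w := by
        rw [hvdef, mulVec_mulVec, hKuinv, hSdef]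
        congr 1
        simp only [Matrix.mul_assoc]
      rw [h1, ← mulVec_mulVec, hSw, mulVec_smul]
    have := hγ (μ + γmin) ⟨v, hvne, heig⟩
    linarith
  have hTpsd : T.PosSemidef := hTH.posSemidef_iff_eigenvalues_nonneg.mpr hkey
  intro d
  have h0 := hTpsd.re_dotProduct_nonneg (B *ᵥ d)
  simp only [RCLike.re_to_real, star_trivial] at h0
  rw [quad_sandwich B T hBt d] at h0
  have hBTB : B * T * B = Kl - γmin • Ku := by
    rw [hTdef, Matrix.mul_sub, Matrix.sub_mul, Matrix.mul_smul, Matrix.smul_mul, mul_one,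
      hBB, hSdef]
    congr 1
    calc B * (B⁻¹ * Kl * B⁻¹) * B = (B * B⁻¹) * Kl * (B⁻¹ * B) := by
          simp only [Matrix.mul_assoc]
      _ = Kl := by rw [hBiB, hBBi, Matrix.one_mul, Matrix.mul_one]
  rw [hBTB, sub_mulVec, smul_mulVec, dotProduct_sub, dotProduct_smul] at h0
  simp only [smul_eq_mul] at h0
  linarith

theorem mm_contraction_factor_bound {m : ℕ} (F : (Fin m → ℝ) → ℝ)
    (hF : Differentiable ℝ F)
    (gradF : (Fin m → ℝ) → (Fin m → ℝ))
    (hgrad : ∀ β v : Fin m → ℝ, fderiv ℝ F β v = gradF β ⬝ᵥ v)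
    (Kl Ku : Matrix (Fin m) (Fin m) ℝ) (hKl : Kl.PosDef) (hKu : Ku.PosDef)
    (hsandwich : ∀ α β : Fin m → ℝ,
      F β + gradF β ⬝ᵥ (α - β) + (α - β) ⬝ᵥ Kl.mulVec (α - β) ≤ F α ∧
      F α ≤ F β + gradF β ⬝ᵥ (α - β) + (α - β) ⬝ᵥ Ku.mulVec (α - β))
    (αhat : Fin m → ℝ)
    (hmin : ∀ α : Fin m → ℝ, α ≠ αhat → F αhat < F α)
    (Q : (Fin m → ℝ) → (Fin m → ℝ) → ℝ)
    (hQ : ∀ α β : Fin m → ℝ,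
      Q α β = F β + gradF β ⬝ᵥ (α - β) + (α - β) ⬝ᵥ Ku.mulVec (α - β))
    (γmin : ℝ)
    (hγ : IsLeast {μ : ℝ | ∃ v : Fin m → ℝ, v ≠ 0 ∧ (Ku⁻¹ * Kl).mulVec v = μ • v} γmin)
    (αk : Fin m → ℝ) (hαk : αk ≠ αhat)
    (Λk : ℝ)
    (hΛ : Λk = (Q αhat αk - F αhat) / ((αhat - αk) ⬝ᵥ Ku.mulVec (αhat - αk))) :
    Λk ≤ 1 - γmin ∧ 1 - γmin < 1 := by
  have hdetKu : IsUnit Ku.det := isUnit_iff_ne_zero.mpr hKu.det_pos.ne'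
  -- γmin > 0
  obtain ⟨v, hvne, heig⟩ := hγ.1
  have hKlv : Kl *ᵥ v = γmin • (Ku *ᵥ v) := by
    have h1 : Ku *ᵥ ((Ku⁻¹ * Kl) *ᵥ v) = Kl *ᵥ v := by
      rw [mulVec_mulVec, ← Matrix.mul_assoc, mul_nonsing_inv Ku hdetKu, Matrix.one_mul]
    rw [heig, mulVec_smul] at h1
    exact h1.symm
  have hvKl : 0 < v ⬝ᵥ Kl *ᵥ v := by
    have := hKl.re_dotProduct_pos hvne
    simpa using this
  have hvKu : 0 < v ⬝ᵥ Ku *ᵥ v := by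
    have := hKu.re_dotProduct_pos hvne
    simpa using this
  have hvEq : v ⬝ᵥ Kl *ᵥ v = γmin * (v ⬝ᵥ Ku *ᵥ v) := by
    rw [hKlv, dotProduct_smul, smul_eq_mul]
  have hγpos : 0 < γmin := by
    by_contra h
    push_neg at h
    nlinarith
  refine ⟨?_, by linarith⟩
  -- Rayleigh bound
  have hray := rayleigh_lower Kl Ku hKl hKu γmin hγ.2
  set d : Fin m → ℝ := αhat - αk with hddef
  have hdne : d ≠ 0 := sub_ne_zero_of_ne (Ne.symm hαk)
  have hc : 0 < d ⬝ᵥ Ku *ᵥ d := by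
    have := hKu.re_dotProduct_pos hdne
    simpa using this
  have hl := hray d
  have hsw := (hsandwich αhat αk).1
  rw [hΛ, hQ αhat αk, div_le_iff₀ hc]
  nlinarith [hsw, hl, hc]
end

section
/- With the setup of the sandwich quadratic bounds and MM iterates α⁽ᵏ⁺¹⁾ = argmin_α Q(α|α⁽ᵏ⁾), the objective gap contracts: F(α⁽ᵏ⁺¹⁾) - F(α̂) ≤ Λ_k·(F(α⁽ᵏ⁾) - F(α̂)), where Λ_k = (Q(α̂|α⁽ᵏ⁾) - F(α̂)) / ((α̂-α⁽ᵏ⁾)ᵀK_u(α̂-α⁽ᵏ⁾)). -/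
open Matrix

lemma mm_aux_scalar (G c D P Fn Λk : ℝ) (hD : 0 < D) (hdisc : c ^ 2 ≤ P * D)
    (hnext : Fn ≤ G - (1 / 4) * P) (hΛk : Λk = (G + c + D) / D) : Fn ≤ Λk * G := by
  rw [hΛk, div_mul_eq_mul_div, le_div_iff₀ hD]
  nlinarith [sq_nonneg (2 * G + c), hdisc, mul_le_mul_of_nonneg_right hnext hD.le]

theorem mm_objective_gap_contraction {m : ℕ} (F : (Fin m → ℝ) → ℝ)
    (hF : Differentiable ℝ F)
    (gradF : (Fin m → ℝ) → (Fin m → ℝ))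
    (hgrad : ∀ β v : Fin m → ℝ, fderiv ℝ F β v = gradF β ⬝ᵥ v)
    (Ku : Matrix (Fin m) (Fin m) ℝ) (hKu : Ku.PosDef)
    (Q : (Fin m → ℝ) → (Fin m → ℝ) → ℝ)
    (hQ : ∀ α β : Fin m → ℝ,
      Q α β = F β + gradF β ⬝ᵥ (α - β) + (α - β) ⬝ᵥ Ku.mulVec (α - β))
    (hmaj : ∀ α β : Fin m → ℝ, F α ≤ Q α β)
    (αhat : Fin m → ℝ)
    (hmin : ∀ α : Fin m → ℝ, α ≠ αhat → F αhat < F α)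
    (a : ℕ → (Fin m → ℝ))
    (hupd : ∀ k : ℕ, a (k + 1) = a k - (1 / 2 : ℝ) • Ku⁻¹.mulVec (gradF (a k)))
    (Λ : ℕ → ℝ)
    (hΛ : ∀ k : ℕ,
      Λ k = (Q αhat (a k) - F αhat) / ((αhat - a k) ⬝ᵥ Ku.mulVec (αhat - a k))) :
    ∀ k : ℕ, F (a (k + 1)) - F αhat ≤ Λ k * (F (a k) - F αhat) := by
  have hsym : ∀ x y : Fin m → ℝ, x ⬝ᵥ Ku.mulVec y = y ⬝ᵥ Ku.mulVec x := by
    intro x y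
    have hs : Kuᵀ = Ku := by simpa using hKu.1.eq
    rw [dotProduct_mulVec, dotProduct_comm, ← mulVec_transpose, hs]
  have hnn : ∀ x : Fin m → ℝ, 0 ≤ x ⬝ᵥ Ku.mulVec x := by
    intro x; simpa using hKu.posSemidef.dotProduct_mulVec_nonneg x
  have hKuinv : ∀ g : Fin m → ℝ, Ku.mulVec (Ku⁻¹.mulVec g) = g := by
    intro g
    rw [Matrix.mulVec_mulVec, Matrix.mul_nonsing_inv _ hKu.det_pos.ne'.isUnit,
      Matrix.one_mulVec]
  intro k
  by_cases hcase : a k = αhat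
  · -- gradient vanishes at the global minimizer, so the iterate stays put
    have hmin' : ∀ α, F αhat ≤ F α := by
      intro α
      by_cases h : α = αhat
      · simp [h]
      · exact (hmin α h).le
    have hloc : IsLocalMin F αhat := Filter.Eventually.of_forall hmin'
    have hfd : fderiv ℝ F αhat = 0 := hloc.fderiv_eq_zero
    have hg0 : gradF αhat = 0 := by
      have h1 := hgrad αhat (gradF αhat)
      rw [hfd] at h1
      simp only [ContinuousLinearMap.zero_apply] at h1
      exact dotProduct_self_eq_zero.mp h1.symm
    have hnext : a (k + 1) = αhat := by
      rw [hupd k, hcase, hg0]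
      simp
    rw [hnext, hcase]
    simp
  · have hd : αhat - a k ≠ 0 := sub_ne_zero.mpr fun h => hcase h.symm
    have hD : 0 < (αhat - a k) ⬝ᵥ Ku.mulVec (αhat - a k) := by
      simpa using hKu.dotProduct_mulVec_pos hd
    -- abbreviations (plain terms, no `set`)
    have hKug : Ku.mulVec (Ku⁻¹.mulVec (gradF (a k))) = gradF (a k) := hKuinv _
    have h1 : (αhat - a k) ⬝ᵥ Ku.mulVec (Ku⁻¹.mulVec (gradF (a k)))
        = gradF (a k) ⬝ᵥ (αhat - a k) := by
      rw [hKug, dotProduct_comm]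
    have h2 : (Ku⁻¹.mulVec (gradF (a k))) ⬝ᵥ Ku.mulVec (αhat - a k)
        = gradF (a k) ⬝ᵥ (αhat - a k) := by
      rw [hsym]; exact h1
    have h3 : (Ku⁻¹.mulVec (gradF (a k))) ⬝ᵥ Ku.mulVec (Ku⁻¹.mulVec (gradF (a k)))
        = gradF (a k) ⬝ᵥ (Ku⁻¹.mulVec (gradF (a k))) := by
      rw [hKug, dotProduct_comm]
    -- discriminant inequality  c² ≤ P·D
    have hxnn := hnn ((-(gradF (a k) ⬝ᵥ (αhat - a k))) • (αhat - a k)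
      + ((αhat - a k) ⬝ᵥ Ku.mulVec (αhat - a k)) • (Ku⁻¹.mulVec (gradF (a k))))
    have hxval : ((-(gradF (a k) ⬝ᵥ (αhat - a k))) • (αhat - a k)
        + ((αhat - a k) ⬝ᵥ Ku.mulVec (αhat - a k)) • (Ku⁻¹.mulVec (gradF (a k))))
        ⬝ᵥ Ku.mulVec ((-(gradF (a k) ⬝ᵥ (αhat - a k))) • (αhat - a k)
        + ((αhat - a k) ⬝ᵥ Ku.mulVec (αhat - a k)) • (Ku⁻¹.mulVec (gradF (a k))))
        = ((αhat - a k) ⬝ᵥ Ku.mulVec (αhat - a k))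
          * ((gradF (a k) ⬝ᵥ (Ku⁻¹.mulVec (gradF (a k))))
              * ((αhat - a k) ⬝ᵥ Ku.mulVec (αhat - a k))
            - (gradF (a k) ⬝ᵥ (αhat - a k)) ^ 2) := by
      simp only [Matrix.mulVec_add, Matrix.mulVec_smul, dotProduct_add, add_dotProduct,
        dotProduct_smul, smul_dotProduct, smul_eq_mul, h1, h2, h3]
      ring
    have hdisc : (gradF (a k) ⬝ᵥ (αhat - a k)) ^ 2
        ≤ (gradF (a k) ⬝ᵥ (Ku⁻¹.mulVec (gradF (a k))))
          * ((αhat - a k) ⬝ᵥ Ku.mulVec (αhat - a k)) := by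
      rw [hxval] at hxnn
      nlinarith [hxnn, hD]
    -- value of Q at the next iterate
    have hstep : a (k + 1) - a k = (-(1 / 2 : ℝ)) • (Ku⁻¹.mulVec (gradF (a k))) := by
      rw [hupd k, sub_sub_cancel_left, ← neg_smul]
    have hQ1 : Q (a (k + 1)) (a k)
        = F (a k) - (1 / 4 : ℝ) * (gradF (a k) ⬝ᵥ (Ku⁻¹.mulVec (gradF (a k)))) := by
      rw [hQ, hstep]
      simp only [Matrix.mulVec_smul, dotProduct_smul, smul_dotProduct, smul_eq_mul, h3]
      ring
    have hnextF : F (a (k + 1)) - F αhat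
        ≤ (F (a k) - F αhat)
          - (1 / 4 : ℝ) * (gradF (a k) ⬝ᵥ (Ku⁻¹.mulVec (gradF (a k)))) := by
      have := hmaj (a (k + 1)) (a k)
      rw [hQ1] at this
      linarith
    -- value of Λ k
    have hΛk : Λ k = ((F (a k) - F αhat) + gradF (a k) ⬝ᵥ (αhat - a k)
        + (αhat - a k) ⬝ᵥ Ku.mulVec (αhat - a k))
        / ((αhat - a k) ⬝ᵥ Ku.mulVec (αhat - a k)) := by
      rw [hΛ k, hQ]
      congr 1
      ring
    exact mm_aux_scalar _ _ _ _ _ _ hD hdisc hnextF hΛk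
end

section
/- Under the sandwich quadratic bounds with positive definite K_l and K_u, setting Γ = 1 - γ_min(K_u⁻¹K_l), the MM iterates satisfy the linear rate ‖α⁽ᵏ⁺¹⁾ - α̂‖ ≤ √(Γ·γ_max(K_u)/γ_min(K_l)) · ‖α⁽ᵏ⁾ - α̂‖. -/
open Matrix

namespace MMAux

variable {n : Type*} [Fintype n] [DecidableEq n]

lemma herm_transpose_eq {A : Matrix n n ℝ} (hA : A.IsHermitian) : Aᵀ = A := by
  ext i j
  have := congrFun (congrFun hA i) j
  simpa [Matrix.conjTranspose_apply] using this

lemma dot_mulVec_eq (A : Matrix n n ℝ) (v z : n → ℝ) :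
    v ⬝ᵥ (A *ᵥ z) = (Aᵀ *ᵥ v) ⬝ᵥ z := by
  rw [dotProduct_mulVec, mulVec_transpose]

lemma herm_dot {A : Matrix n n ℝ} (hA : A.IsHermitian) (v w : n → ℝ) :
    (A *ᵥ v) ⬝ᵥ w = v ⬝ᵥ (A *ᵥ w) := by
  rw [dot_mulVec_eq, herm_transpose_eq hA, dotProduct_comm]

lemma star_eq_transpose (A : Matrix n n ℝ) : star A = Aᵀ := by
  ext i j
  simp [Matrix.star_apply]

lemma rayleigh_bounds [Nonempty n] {A : Matrix n n ℝ} (hA : A.IsHermitian) (v : n → ℝ) :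
    (⨅ i, hA.eigenvalues i) * (v ⬝ᵥ v) ≤ v ⬝ᵥ (A *ᵥ v) ∧
    v ⬝ᵥ (A *ᵥ v) ≤ (⨆ i, hA.eigenvalues i) * (v ⬝ᵥ v) := by
  classical
  set U : Matrix n n ℝ := (hA.eigenvectorUnitary : Matrix n n ℝ) with hUdef
  have hU1 : U * Uᵀ = 1 := by
    rw [← star_eq_transpose]
    exact (mem_unitaryGroup_iff.mp hA.eigenvectorUnitary.2)
  set w : n → ℝ := Uᵀ *ᵥ v with hwdef
  have hnorm : v ⬝ᵥ v = ∑ i, w i ^ 2 := by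
    have h1 : w ⬝ᵥ w = v ⬝ᵥ v := by
      rw [hwdef, dot_mulVec_eq, transpose_transpose, mulVec_mulVec, hU1, one_mulVec]
    rw [← h1]
    simp [dotProduct, sq]
  have hquad : v ⬝ᵥ (A *ᵥ v) = ∑ i, hA.eigenvalues i * w i ^ 2 := by
    have hsp : A = U * diagonal hA.eigenvalues * Uᵀ := by
      rw [← star_eq_transpose]
      convert hA.spectral_theorem using 2
      simp [Unitary.conjStarAlgAut_apply, hUdef]
    conv_lhs => rw [hsp]
    rw [← mulVec_mulVec, ← mulVec_mulVec, dot_mulVec_eq, ← hwdef]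
    simp only [dotProduct, mulVec_diagonal]
    exact Finset.sum_congr rfl fun i _ => by ring
  have hw2 : ∀ i, (0:ℝ) ≤ w i ^ 2 := fun i => sq_nonneg _
  constructor
  · rw [hquad, hnorm, Finset.mul_sum]
    exact Finset.sum_le_sum fun i _ =>
      mul_le_mul_of_nonneg_right (ciInf_le (Finite.bddBelow_range _) i) (hw2 i)
  · rw [hquad, hnorm, Finset.mul_sum]
    exact Finset.sum_le_sum fun i _ =>
      mul_le_mul_of_nonneg_right (le_ciSup (Finite.bddAbove_range _) i) (hw2 i)

lemma exists_min_eigenvector [Nonempty n] {A : Matrix n n ℝ} (hA : A.IsHermitian) :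
    ∃ v : n → ℝ, v ≠ 0 ∧ A *ᵥ v = (⨅ i, hA.eigenvalues i) • v := by
  obtain ⟨j, hj⟩ := Finite.exists_min hA.eigenvalues
  have hinf : ⨅ i, hA.eigenvalues i = hA.eigenvalues j :=
    le_antisymm (ciInf_le (Finite.bddBelow_range _) j) (le_ciInf hj)
  refine ⟨⇑(hA.eigenvectorBasis j), ?_, by rw [hinf]; exact hA.mulVec_eigenvectorBasis j⟩
  have h0 := hA.eigenvectorBasis.orthonormal.ne_zero j
  intro hc
  apply h0
  ext i
  exact congrFun hc i

end MMAux

theorem mm_linear_rate {m : ℕ} (F : (Fin m → ℝ) → ℝ)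
    (hF : Differentiable ℝ F)
    (gradF : (Fin m → ℝ) → (Fin m → ℝ))
    (hgrad : ∀ β v : Fin m → ℝ, fderiv ℝ F β v = gradF β ⬝ᵥ v)
    (Kl Ku : Matrix (Fin m) (Fin m) ℝ) (hKl : Kl.PosDef) (hKu : Ku.PosDef)
    (hsandwich : ∀ α β : Fin m → ℝ,
      F β + gradF β ⬝ᵥ (α - β) + (α - β) ⬝ᵥ Kl.mulVec (α - β) ≤ F α ∧
      F α ≤ F β + gradF β ⬝ᵥ (α - β) + (α - β) ⬝ᵥ Ku.mulVec (α - β))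
    (αhat : Fin m → ℝ) (hgradhat : gradF αhat = 0)
    (hmin : ∀ α : Fin m → ℝ, α ≠ αhat → F αhat < F α)
    (a : ℕ → (Fin m → ℝ))
    (hupd : ∀ k : ℕ, a (k + 1) = a k - (1 / 2 : ℝ) • Ku⁻¹.mulVec (gradF (a k)))
    (γmin : ℝ)
    (hγ : IsLeast {μ : ℝ | ∃ v : Fin m → ℝ, v ≠ 0 ∧ (Ku⁻¹ * Kl).mulVec v = μ • v} γmin)
    (Γ : ℝ) (hΓ : Γ = 1 - γmin) :
    ∀ k : ℕ,
      Real.sqrt (∑ i, (a (k + 1) i - αhat i) ^ 2)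
        ≤ Real.sqrt (Γ * (⨆ i, hKu.isHermitian.eigenvalues i)
              / (⨅ i, hKl.isHermitian.eigenvalues i))
          * Real.sqrt (∑ i, (a k i - αhat i) ^ 2) := by
  classical
  obtain ⟨v₁, hv₁0, hv₁⟩ := hγ.1
  haveI hm : Nonempty (Fin m) := by
    by_contra h
    exact hv₁0 (funext fun i => ((h ⟨i⟩).elim))
  have hKusym := hKu.isHermitian
  have hKlsym := hKl.isHermitian
  have hdetKu : IsUnit Ku.det := isUnit_iff_ne_zero.mpr (ne_of_gt hKu.det_pos)
  have hKuKu : Ku * Ku⁻¹ = 1 := mul_nonsing_inv Ku hdetKu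
  have hKuKu' : Ku⁻¹ * Ku = 1 := nonsing_inv_mul Ku hdetKu
  have hposKu : ∀ u : Fin m → ℝ, u ≠ 0 → 0 < u ⬝ᵥ (Ku *ᵥ u) := by
    intro u hu; simpa using hKu.dotProduct_mulVec_pos hu
  have hposKl : ∀ u : Fin m → ℝ, u ≠ 0 → 0 < u ⬝ᵥ (Kl *ᵥ u) := by
    intro u hu; simpa using hKl.dotProduct_mulVec_pos hu
  have hKuQnonneg : ∀ u : Fin m → ℝ, 0 ≤ u ⬝ᵥ (Ku *ᵥ u) := by
    intro u; simpa using hKu.posSemidef.dotProduct_mulVec_nonneg u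
  have hcmp : ∀ u : Fin m → ℝ, u ⬝ᵥ (Kl *ᵥ u) ≤ u ⬝ᵥ (Ku *ᵥ u) := by
    intro u
    have h1 := (hsandwich (αhat + u) αhat).1
    have h2 := (hsandwich (αhat + u) αhat).2
    simp only [add_sub_cancel_left] at h1 h2
    linarith
  -- γmin ∈ (0,1]
  have hKlv₁ : Kl *ᵥ v₁ = γmin • (Ku *ᵥ v₁) := by
    have h := congrArg (fun z => Ku *ᵥ z) hv₁
    simpa [mulVec_mulVec, ← Matrix.mul_assoc, hKuKu, Matrix.one_mul, mulVec_smul] using h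
  have hq1 : v₁ ⬝ᵥ (Kl *ᵥ v₁) = γmin * (v₁ ⬝ᵥ (Ku *ᵥ v₁)) := by
    rw [hKlv₁, dotProduct_smul, smul_eq_mul]
  have hposu : 0 < v₁ ⬝ᵥ (Ku *ᵥ v₁) := hposKu v₁ hv₁0
  have hγpos : 0 < γmin := by nlinarith [hposKl v₁ hv₁0]
  have hγle1 : γmin ≤ 1 := by nlinarith [hcmp v₁]
  have hΓpos : 0 ≤ Γ := by rw [hΓ]; linarith
  -- square root of Ku
  set S := (open scoped MatrixOrder in CFC.sqrt Ku) with hSdef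
  have hSS : S * S = Ku := by
    open scoped MatrixOrder in exact CFC.sqrt_mul_sqrt_self Ku hKu.posSemidef.nonneg
  have hSsym : S.IsHermitian := by
    open scoped MatrixOrder in exact (CFC.sqrt_nonneg Ku).posSemidef.isHermitian
  have hdetS : IsUnit S.det := by
    refine isUnit_iff_ne_zero.mpr fun h => ne_of_gt hKu.det_pos ?_
    rw [← hSS, det_mul, h, mul_zero]
  have hSSi : S * S⁻¹ = 1 := mul_nonsing_inv S hdetS
  have hSiS : S⁻¹ * S = 1 := nonsing_inv_mul S hdetS
  have hSisym : (S⁻¹).IsHermitian := by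
    rw [Matrix.IsHermitian, conjTranspose_nonsing_inv, hSsym.eq]
  set M := S⁻¹ * Kl * S⁻¹ with hMdef
  have hMsym : M.IsHermitian := by
    rw [Matrix.IsHermitian, hMdef, conjTranspose_mul, conjTranspose_mul,
      hSisym.eq, hKlsym.eq, Matrix.mul_assoc]
  have hMS : ∀ u : Fin m → ℝ, (S *ᵥ u) ⬝ᵥ (M *ᵥ (S *ᵥ u)) = u ⬝ᵥ (Kl *ᵥ u) := by
    intro u
    have h1 : M *ᵥ (S *ᵥ u) = S⁻¹ *ᵥ (Kl *ᵥ u) := by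
      rw [mulVec_mulVec, mulVec_mulVec, hMdef, Matrix.mul_assoc (S⁻¹ * Kl) S⁻¹ S,
        hSiS, Matrix.mul_one]
    rw [h1, MMAux.herm_dot hSsym, mulVec_mulVec, hSSi, one_mulVec]
  have hSnorm : ∀ u : Fin m → ℝ, (S *ᵥ u) ⬝ᵥ (S *ᵥ u) = u ⬝ᵥ (Ku *ᵥ u) := by
    intro u
    rw [MMAux.herm_dot hSsym, mulVec_mulVec, hSS]
  obtain ⟨w₀, hw₀0, hw₀⟩ := MMAux.exists_min_eigenvector hMsym
  set μ₀ := ⨅ i, hMsym.eigenvalues i with hμ₀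
  have hv₀ : (Ku⁻¹ * Kl) *ᵥ (S⁻¹ *ᵥ w₀) = μ₀ • (S⁻¹ *ᵥ w₀) := by
    have hKui : Ku⁻¹ = S⁻¹ * S⁻¹ := by rw [← hSS, Matrix.mul_inv_rev]
    have hMS2 : (S⁻¹ * S⁻¹ * Kl) *ᵥ (S⁻¹ *ᵥ w₀) = S⁻¹ *ᵥ (M *ᵥ w₀) := by
      rw [mulVec_mulVec, mulVec_mulVec, hMdef]
      simp only [Matrix.mul_assoc]
    rw [hKui, hMS2, hw₀, mulVec_smul]
  have hv₀0 : S⁻¹ *ᵥ w₀ ≠ 0 := by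
    intro h
    apply hw₀0
    have h2 : S *ᵥ (S⁻¹ *ᵥ w₀) = w₀ := by rw [mulVec_mulVec, hSSi, one_mulVec]
    rw [h, mulVec_zero] at h2
    exact h2.symm
  have hγμ : γmin ≤ μ₀ := hγ.2 ⟨S⁻¹ *ᵥ w₀, hv₀0, hv₀⟩
  have hB : ∀ u : Fin m → ℝ, γmin * (u ⬝ᵥ (Ku *ᵥ u)) ≤ u ⬝ᵥ (Kl *ᵥ u) := by
    intro u
    have h1 := (MMAux.rayleigh_bounds hMsym (S *ᵥ u)).1
    rw [← hμ₀, hMS u, hSnorm u] at h1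
    nlinarith [hKuQnonneg u]
  -- extreme eigenvalues of Kl and Ku
  set γl := ⨅ i, hKl.isHermitian.eigenvalues i with hγl
  set γu := ⨆ i, hKu.isHermitian.eigenvalues i with hγu
  have hγlpos : 0 < γl := by
    obtain ⟨j, hj⟩ := Finite.exists_min hKl.isHermitian.eigenvalues
    have h : γl = hKl.isHermitian.eigenvalues j :=
      le_antisymm (ciInf_le (Finite.bddBelow_range _) j) (le_ciInf hj)
    rw [h]; exact hKl.eigenvalues_pos j
  have hγupos : 0 < γu :=
    lt_of_lt_of_le (hKu.eigenvalues_pos (Classical.arbitrary _))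
      (le_ciSup (Finite.bddAbove_range _) _)
  intro k
  set p := a k with hp
  set q := a (k + 1) with hq
  set g := gradF p with hg
  set d : Fin m → ℝ := -((1:ℝ)/2) • (Ku⁻¹ *ᵥ g) with hd
  have hqpd : q = p + d := by
    rw [hq, hupd k, hd]
    ext i
    simp [Pi.smul_apply, sub_eq_add_neg, hp, hg]
  have hKud : Ku *ᵥ d = -((1:ℝ)/2) • g := by
    rw [hd, mulVec_smul, mulVec_mulVec, hKuKu, one_mulVec]
  have hgd : ∀ e : Fin m → ℝ, g ⬝ᵥ e = -2 * (d ⬝ᵥ (Ku *ᵥ e)) := by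
    intro e
    rw [← MMAux.herm_dot hKusym d e, hKud, smul_dotProduct, smul_eq_mul]
    ring
  have hid : ∀ e : Fin m → ℝ, g ⬝ᵥ e + e ⬝ᵥ (Ku *ᵥ e)
      = (e - d) ⬝ᵥ (Ku *ᵥ (e - d)) - d ⬝ᵥ (Ku *ᵥ d) := by
    intro e
    have hsymm : d ⬝ᵥ (Ku *ᵥ e) = e ⬝ᵥ (Ku *ᵥ d) := by
      rw [← MMAux.herm_dot hKusym d e, dotProduct_comm]
    have hexp : (e - d) ⬝ᵥ (Ku *ᵥ (e - d))
        = e ⬝ᵥ (Ku *ᵥ e) - 2 * (e ⬝ᵥ (Ku *ᵥ d)) + d ⬝ᵥ (Ku *ᵥ d) := by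
      rw [Matrix.mulVec_sub, sub_dotProduct, dotProduct_sub, dotProduct_sub, hsymm]
      ring
    rw [hexp, hgd e, hsymm]
    ring
  have hFq : F q ≤ F p - d ⬝ᵥ (Ku *ᵥ d) := by
    have h := (hsandwich (p + d) p).2
    simp only [add_sub_cancel_left] at h
    have h0 : g ⬝ᵥ d + d ⬝ᵥ (Ku *ᵥ d) = - (d ⬝ᵥ (Ku *ᵥ d)) := by
      rw [hid d, sub_self]
      simp
    rw [hqpd]
    rw [← hg] at h
    linarith
  have hsur : ∀ e : Fin m → ℝ, F q ≤ F p + g ⬝ᵥ e + e ⬝ᵥ (Ku *ᵥ e) := by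
    intro e
    have hpos : 0 ≤ (e - d) ⬝ᵥ (Ku *ᵥ (e - d)) := hKuQnonneg _
    have h := hid e
    linarith
  set u : Fin m → ℝ := αhat - p with hu
  have hlow : F p + g ⬝ᵥ u + u ⬝ᵥ (Kl *ᵥ u) ≤ F αhat := by
    have h := (hsandwich αhat p).1
    rw [← hg, ← hu] at h
    exact h
  have hkey : F q - F αhat ≤ Γ * (F p - F αhat) := by
    have h1 := hsur (γmin • u)
    have h2 : g ⬝ᵥ (γmin • u) = γmin * (g ⬝ᵥ u) := by
      rw [dotProduct_smul, smul_eq_mul]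
    have h3 : (γmin • u) ⬝ᵥ (Ku *ᵥ (γmin • u)) = γmin * γmin * (u ⬝ᵥ (Ku *ᵥ u)) := by
      rw [mulVec_smul, smul_dotProduct, dotProduct_smul, smul_eq_mul, smul_eq_mul]
      ring
    rw [h2, h3] at h1
    have h4 := hB u
    have h5 : g ⬝ᵥ u ≤ F αhat - F p - u ⬝ᵥ (Kl *ᵥ u) := by linarith
    rw [hΓ]
    nlinarith [mul_le_mul_of_nonneg_left h5 hγpos.le,
      mul_le_mul_of_nonneg_left h4 hγpos.le]
  have hup : F p - F αhat ≤ u ⬝ᵥ (Ku *ᵥ u) := by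
    have h := (hsandwich p αhat).2
    rw [hgradhat] at h
    have hpm : p - αhat = -u := by rw [hu, neg_sub]
    rw [hpm] at h
    simp only [zero_dotProduct, add_zero, Matrix.mulVec_neg, dotProduct_neg,
      neg_dotProduct, neg_neg] at h
    linarith
  set w : Fin m → ℝ := q - αhat with hw
  have hlo : w ⬝ᵥ (Kl *ᵥ w) ≤ F q - F αhat := by
    have h := (hsandwich q αhat).1
    rw [hgradhat, ← hw] at h
    simp only [zero_dotProduct, add_zero] at h
    linarith
  have hKl_low := (MMAux.rayleigh_bounds hKl.isHermitian w).1
  have hKu_up := (MMAux.rayleigh_bounds hKu.isHermitian u).2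
  rw [← hγl] at hKl_low
  rw [← hγu] at hKu_up
  have hsum1 : ∑ i, (q i - αhat i) ^ 2 = w ⬝ᵥ w := by
    simp only [dotProduct, hw, Pi.sub_apply]
    exact Finset.sum_congr rfl fun i _ => by ring
  have hsum2 : ∑ i, (p i - αhat i) ^ 2 = u ⬝ᵥ u := by
    simp only [dotProduct, hu, Pi.sub_apply]
    exact Finset.sum_congr rfl fun i _ => by ring
  have hmain : w ⬝ᵥ w ≤ (Γ * γu / γl) * (u ⬝ᵥ u) := by
    have hchain : γl * (w ⬝ᵥ w) ≤ Γ * γu * (u ⬝ᵥ u) := by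
      calc γl * (w ⬝ᵥ w) ≤ w ⬝ᵥ (Kl *ᵥ w) := hKl_low
        _ ≤ F q - F αhat := hlo
        _ ≤ Γ * (F p - F αhat) := hkey
        _ ≤ Γ * (u ⬝ᵥ (Ku *ᵥ u)) := mul_le_mul_of_nonneg_left hup hΓpos
        _ ≤ Γ * (γu * (u ⬝ᵥ u)) := mul_le_mul_of_nonneg_left hKu_up hΓpos
        _ = Γ * γu * (u ⬝ᵥ u) := by ring
    rw [div_mul_eq_mul_div, le_div_iff₀ hγlpos]
    nlinarith
  have hfrac : 0 ≤ Γ * γu / γl := div_nonneg (mul_nonneg hΓpos hγupos.le) hγlpos.le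
  have h1 : Real.sqrt (w ⬝ᵥ w) ≤ Real.sqrt ((Γ * γu / γl) * (u ⬝ᵥ u)) :=
    Real.sqrt_le_sqrt hmain
  rw [Real.sqrt_mul hfrac] at h1
  rw [hsum1, hsum2]
  exact h1
end
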